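/- Telescoping reduction of the top-down queue-jumping model at zero noise: let r be a strict partial order on a finite type A with |A| = m ≥ 1 and let Y : Fin m ≃ A be an enumeration. Then ∏_{j=1}^{m} C_{Y_j}(r[{Y_j, …, Y_m}]) / C(r[{Y_j, …, Y_m}]) equals 1/C(r) if Y is a linear extension of r, and equals 0 otherwise. That is, the queue-jumping likelihood q_D with p = 0 is the uniform distribution on the linear extensions of r. -/

import Mathlib

open scoped Classical

/-- `Y` is a linear extension of `r`: for positions `i < j`, the later element is never
above the earlier one. -/
def IsLinExt {A : Type*} {n : ℕ} (r : A → A → Prop) (Y : Fin n ≃ A) : Prop :=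
  ∀ i j : Fin n, i < j → ¬ r (Y j) (Y i)

/-- `C(r)`: the number of linear extensions of `r`. -/
noncomputable def numExt {A : Type*} [Fintype A] (r : A → A → Prop) : ℕ :=
  Nat.card {Y : Fin (Fintype.card A) ≃ A // IsLinExt r Y}

/-- `C_a(r)`: the number of linear extensions of `r` whose first entry is `a`. -/
noncomputable def numExtFirst {A : Type*} [Fintype A] (r : A → A → Prop) (a : A) : ℕ :=
  Nat.card {Y : Fin (Fintype.card A) ≃ A //
    IsLinExt r Y ∧ ∀ i : Fin (Fintype.card A), (i : ℕ) = 0 → Y i = a}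

/-- The suborder `r[O]`: the restriction of `r` to the subset `O`. -/
def subrel {A : Type*} (r : A → A → Prop) (O : Set A) : O → O → Prop :=
  fun x y => r (x : A) (y : A)

/-! ### Auxiliary constructions and lemmas -/

section Aux

variable {B B' : Type*}

/-- Prepend `a` to an enumeration of the complement of `a`. -/
noncomputable def insEquiv {k : ℕ} (a : B) (Z : Fin k ≃ ↥{b : B | b ≠ a}) :
    Fin (k + 1) ≃ B where
  toFun i := Fin.cases a (fun i' => (Z i').1) i
  invFun b := if h : b = a then 0 else (Z.symm ⟨b, h⟩).succ
  left_inv i := by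
    induction i using Fin.cases with
    | zero => simp
    | succ i' =>
      have hne : (Z i').1 ≠ a := (Z i').2
      simp only [Fin.cases_succ]
      show (if h : (Z i').1 = a then 0 else (Z.symm ⟨(Z i').1, h⟩).succ) = i'.succ
      rw [dif_neg hne]
      simp
  right_inv b := by
    by_cases h : b = a
    · subst h; simp
    · simp only [dif_neg h, Fin.cases_succ]
      rw [Z.apply_symm_apply]

/-- Remove the first entry `a` from an enumeration starting with `a`. -/
noncomputable def remEquiv {k : ℕ} (a : B) (Y : Fin (k + 1) ≃ B) (h0 : Y 0 = a) :
    Fin k ≃ ↥{b : B | b ≠ a} where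
  toFun i := ⟨Y i.succ, fun h => Fin.succ_ne_zero i (Y.injective (h.trans h0.symm))⟩
  invFun c := (Y.symm c.1).pred (fun h => c.2 (by
    have : c.1 = Y 0 := by rw [← h, Y.apply_symm_apply]
    rw [this, h0]))
  left_inv i := by simp
  right_inv c := by
    apply Subtype.ext
    simp

/-- Every finite strict partial order has a linear extension. -/
lemma exists_linExt [Fintype B] (r : B → B → Prop) (hirr : Irreflexive r)
    (htrans : Transitive r) :
    Nonempty {Y : Fin (Fintype.card B) ≃ B // IsLinExt r Y} := by
  classical
  set le : B → B → Prop := fun a b => r a b ∨ a = b with hle_def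
  haveI : IsPartialOrder B le :=
    { refl := fun a => Or.inr rfl
      trans := by
        rintro a b c (hab | rfl) (hbc | rfl)
        · exact Or.inl (htrans hab hbc)
        · exact Or.inl hab
        · exact Or.inl hbc
        · exact Or.inr rfl
      antisymm := by
        intro a b hab hba
        rcases hab with hab | rfl
        · rcases hba with hba | rfl
          · exact absurd (htrans hab hba) (hirr a)
          · rfl
        · rfl }
  obtain ⟨s, hs, hles⟩ := extend_partialOrder le
  haveI := hs.toIsPartialOrder
  haveI := hs.toTotal
  haveI : DecidableRel s := Classical.decRel s
  set l : List B := Finset.univ.sort s with hl_def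
  have hnd : l.Nodup := Finset.sort_nodup _ s
  have hmem : ∀ x : B, x ∈ l := fun x => (Finset.mem_sort s).2 (Finset.mem_univ x)
  have hlen : l.length = Fintype.card B := by
    rw [hl_def, Finset.length_sort, Finset.card_univ]
  set E := List.Nodup.getEquivOfForallMemList l hnd hmem with hE_def
  refine ⟨⟨(finCongr hlen.symm).trans E, ?_⟩⟩
  intro i j hij hr
  have hsorted : l.Pairwise s := Finset.pairwise_sort _ s
  have hlt : (finCongr hlen.symm i) < (finCongr hlen.symm j) := hij
  have h1 : s (((finCongr hlen.symm).trans E) i) (((finCongr hlen.symm).trans E) j) :=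
    hsorted.rel_get_of_lt hlt
  have h2 : s (((finCongr hlen.symm).trans E) j) (((finCongr hlen.symm).trans E) i) :=
    hles _ _ (Or.inl hr)
  have heq : (((finCongr hlen.symm).trans E) i) = (((finCongr hlen.symm).trans E) j) :=
    _root_.antisymm h1 h2
  exact hirr _ (heq ▸ hr)

lemma numExt_pos [Fintype B] (r : B → B → Prop) (hirr : Irreflexive r)
    (htrans : Transitive r) : 0 < numExt r := by
  haveI := exists_linExt r hirr htrans
  exact Nat.card_pos

/-- Transport of the linear-extension count along a relation isomorphism. -/
lemma card_ext_congr {n n' : ℕ} (hn : n = n') (e : B ≃ B')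
    (r : B → B → Prop) (r' : B' → B' → Prop)
    (hr : ∀ x y, r x y ↔ r' (e x) (e y)) :
    Nat.card {Y : Fin n ≃ B // IsLinExt r Y}
      = Nat.card {Y : Fin n' ≃ B' // IsLinExt r' Y} := by
  apply Nat.card_congr
  refine Equiv.subtypeEquiv (Equiv.equivCongr (finCongr hn) e) ?_
  intro Y
  constructor
  · intro h i j hij hrel
    exact h ((finCongr hn).symm i) ((finCongr hn).symm j) hij ((hr _ _).mpr hrel)
  · intro h i j hij hrel
    exact h (finCongr hn i) (finCongr hn j) hij ((hr _ _).mp hrel)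

lemma card_extFirst_congr {n n' : ℕ} (hn : n = n') (e : B ≃ B')
    (r : B → B → Prop) (r' : B' → B' → Prop)
    (hr : ∀ x y, r x y ↔ r' (e x) (e y)) (a : B) :
    Nat.card {Y : Fin n ≃ B // IsLinExt r Y ∧ ∀ i : Fin n, (i : ℕ) = 0 → Y i = a}
      = Nat.card {Y : Fin n' ≃ B' //
          IsLinExt r' Y ∧ ∀ i : Fin n', (i : ℕ) = 0 → Y i = e a} := by
  apply Nat.card_congr
  refine Equiv.subtypeEquiv (Equiv.equivCongr (finCongr hn) e) ?_
  intro Y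
  constructor
  · rintro ⟨h, h0⟩
    refine ⟨?_, ?_⟩
    · intro i j hij hrel
      exact h ((finCongr hn).symm i) ((finCongr hn).symm j) hij ((hr _ _).mpr hrel)
    · intro i hi
      exact congrArg e (h0 ((finCongr hn).symm i) hi)
  · rintro ⟨h, h0⟩
    refine ⟨?_, ?_⟩
    · intro i j hij hrel
      exact h (finCongr hn i) (finCongr hn j) hij ((hr _ _).mp hrel)
    · intro i hi
      exact e.injective (h0 (finCongr hn i) hi)

lemma numExt_congr [Fintype B] [Fintype B'] (e : B ≃ B')
    (r : B → B → Prop) (r' : B' → B' → Prop)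
    (hr : ∀ x y, r x y ↔ r' (e x) (e y)) : numExt r = numExt r' :=
  card_ext_congr (Fintype.card_congr e) e r r' hr

lemma numExtFirst_eq_zero [Fintype B] (r : B → B → Prop) (hirr : Irreflexive r)
    {a b : B} (hba : r b a) : numExtFirst r a = 0 := by
  have hpos : 0 < Fintype.card B := Fintype.card_pos_iff.mpr ⟨a⟩
  haveI : IsEmpty {Y : Fin (Fintype.card B) ≃ B //
      IsLinExt r Y ∧ ∀ i : Fin (Fintype.card B), (i : ℕ) = 0 → Y i = a} := by
    constructor
    rintro ⟨Y, hY, h0⟩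
    set i0 : Fin (Fintype.card B) := ⟨0, hpos⟩ with hi0
    have hY0 : Y i0 = a := h0 i0 rfl
    by_cases hj : Y.symm b = i0
    · have : b = a := by rw [← hY0, ← hj, Y.apply_symm_apply]
      exact hirr a (this ▸ hba)
    · have hlt : i0 < Y.symm b := by
        rw [Fin.lt_def]
        exact Nat.pos_of_ne_zero (fun h => hj (Fin.ext (by simpa using h)))
      exact hY i0 (Y.symm b) hlt (by rwa [Y.apply_symm_apply, hY0])
  simp [numExtFirst]

/-- Removing a maximal first element: `C_a(r) = C(r[B \ {a}])`. -/
lemma numExtFirst_eq [Fintype B] (r : B → B → Prop) (a : B)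
    (hmax : ∀ b, ¬ r b a) :
    numExtFirst r a = numExt (subrel r {b | b ≠ a}) := by
  classical
  set k := Fintype.card ↥{b : B | b ≠ a} with hk
  have hcard : Fintype.card B = k + 1 := by
    have h1 : Fintype.card {x : B // ¬ x = a}
        = Fintype.card B - Fintype.card {x : B // x = a} :=
      Fintype.card_subtype_compl _
    have h2 : Fintype.card {x : B // x = a} = 1 := Fintype.card_subtype_eq a
    have h3 : k = Fintype.card {x : B // ¬ x = a} :=
      Fintype.card_congr (Equiv.subtypeEquivRight (fun b => Iff.rfl))
    have hpos : 0 < Fintype.card B := Fintype.card_pos_iff.mpr ⟨a⟩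
    omega
  have Φ : {Y : Fin (k + 1) ≃ B //
        IsLinExt r Y ∧ ∀ i : Fin (k + 1), (i : ℕ) = 0 → Y i = a}
      ≃ {Z : Fin k ≃ ↥{b : B | b ≠ a} // IsLinExt (subrel r {b | b ≠ a}) Z} := by
    refine ⟨fun p => ⟨remEquiv a p.1 (p.2.2 0 rfl), ?_⟩,
      fun q => ⟨insEquiv a q.1, ?_, ?_⟩, ?_, ?_⟩
    · intro i j hij hrel
      exact p.2.1 i.succ j.succ (Fin.succ_lt_succ_iff.mpr hij) hrel
    · intro i j hij hrel
      rcases Fin.eq_zero_or_eq_succ i with hi | ⟨i', rfl⟩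
      · subst hi
        have h00 : insEquiv a q.1 0 = a := by simp [insEquiv]
        rw [h00] at hrel
        exact hmax _ hrel
      · rcases Fin.eq_zero_or_eq_succ j with hj | ⟨j', rfl⟩
        · subst hj; exact absurd hij (Fin.not_lt_zero _)
        · have hi' : insEquiv a q.1 i'.succ = (q.1 i').1 := by simp [insEquiv]
          have hj' : insEquiv a q.1 j'.succ = (q.1 j').1 := by simp [insEquiv]
          rw [hi', hj'] at hrel
          exact q.2 i' j' (Fin.succ_lt_succ_iff.mp hij) hrel
    · intro i hi
      have : i = 0 := Fin.ext hi
      subst this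
      simp [insEquiv]
    · rintro ⟨Y, hY, h0⟩
      apply Subtype.ext
      apply Equiv.ext
      intro i
      induction i using Fin.cases with
      | zero =>
        have := h0 0 rfl
        simp [insEquiv, remEquiv, this]
      | succ i' => simp [insEquiv, remEquiv]
    · rintro ⟨Z, hZ⟩
      apply Subtype.ext
      apply Equiv.ext
      intro i
      apply Subtype.ext
      simp [insEquiv, remEquiv]
  calc numExtFirst r a
      = Nat.card {Y : Fin (k + 1) ≃ B //
          IsLinExt r Y ∧ ∀ i : Fin (k + 1), (i : ℕ) = 0 → Y i = a} :=
        card_extFirst_congr hcard (Equiv.refl B) r r (fun _ _ => Iff.rfl) a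
    _ = Nat.card {Z : Fin k ≃ ↥{b : B | b ≠ a} // IsLinExt (subrel r {b | b ≠ a}) Z} :=
        Nat.card_congr Φ
    _ = numExt (subrel r {b | b ≠ a}) := rfl

lemma numExt_of_isEmpty [Fintype B] [IsEmpty B] (r : B → B → Prop) : numExt r = 1 := by
  haveI : IsEmpty (Fin (Fintype.card B)) := by
    rw [Fintype.card_eq_zero]
    infer_instance
  rw [numExt, Nat.card_eq_one_iff_unique]
  constructor
  · constructor
    rintro ⟨Y, _⟩ ⟨Y', _⟩
    apply Subtype.ext
    apply Equiv.ext
    intro i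
    exact isEmptyElim i
  · exact ⟨⟨Equiv.equivOfIsEmpty _ _, fun i _ _ => isEmptyElim i⟩⟩

lemma prod_div_telescope (g : ℕ → ℝ) (hg : ∀ k, g k ≠ 0) (n : ℕ) :
    (∏ i ∈ Finset.range n, g (i + 1) / g i) = g n / g 0 := by
  induction n with
  | zero => simp [div_self (hg 0)]
  | succ n ih =>
    rw [Finset.prod_range_succ, ih]
    calc g n / g 0 * (g (n + 1) / g n) = g (n + 1) * (g n / g n) / g 0 := by ring
      _ = g (n + 1) / g 0 := by rw [div_self (hg n), mul_one]

end Aux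

/-- Telescoping reduction of the top-down queue-jumping model at zero noise: the product
of the suffix-suborder ratios equals `1/C(r)` when `Y` is a linear extension of `r`, and
`0` otherwise. -/
theorem stmt8 {A : Type*} [Fintype A] [DecidableEq A] (m : ℕ) (hm : 1 ≤ m)
    (hcard : Fintype.card A = m)
    (r : A → A → Prop) (hirr : Irreflexive r) (htrans : Transitive r)
    (Y : Fin m ≃ A) :
    (∏ j : Fin m,
      ((numExtFirst (subrel r {a : A | ∃ i : Fin m, j ≤ i ∧ Y i = a})
          ⟨Y j, ⟨j, le_refl j, rfl⟩⟩ : ℕ) : ℝ) /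
        ((numExt (subrel r {a : A | ∃ i : Fin m, j ≤ i ∧ Y i = a}) : ℕ) : ℝ)) =
      if IsLinExt r Y then 1 / ((numExt r : ℕ) : ℝ) else 0 := by
  classical
  have hsub_irr : ∀ S : Set A, Irreflexive (subrel r S) := fun S x hx => hirr _ hx
  have hsub_trans : ∀ S : Set A, Transitive (subrel r S) :=
    fun S x y z h1 h2 => htrans h1 h2
  by_cases hY : IsLinExt r Y
  · rw [if_pos hY]
    set T : ℕ → Set A := fun k => {a | ∃ i : Fin m, k ≤ (i : ℕ) ∧ Y i = a} with hT
    have hg_pos : ∀ k, 0 < numExt (subrel r (T k)) :=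
      fun k => numExt_pos _ (hsub_irr _) (hsub_trans _)
    have hgne : ∀ k, ((numExt (subrel r (T k)) : ℕ) : ℝ) ≠ 0 :=
      fun k => Nat.cast_ne_zero.mpr (hg_pos k).ne'
    have hstep : ∀ j : Fin m,
        numExtFirst (subrel r (T (j : ℕ))) ⟨Y j, ⟨j, le_refl _, rfl⟩⟩
          = numExt (subrel r (T ((j : ℕ) + 1))) := by
      intro j
      have hmax : ∀ b : ↥(T (j : ℕ)),
          ¬ subrel r (T (j : ℕ)) b ⟨Y j, ⟨j, le_refl _, rfl⟩⟩ := by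
        rintro ⟨b, i, hij, rfl⟩ hrb
        rcases eq_or_lt_of_le hij with heq | hlt
        · have : i = j := Fin.ext heq.symm
          subst this
          exact hirr _ hrb
        · exact hY j i hlt hrb
      rw [numExtFirst_eq _ _ hmax]
      let e : ↥{b : ↥(T (j : ℕ)) | b ≠ (⟨Y j, ⟨j, le_refl _, rfl⟩⟩ : ↥(T (j : ℕ)))}
          ≃ ↥(T ((j : ℕ) + 1)) :=
        { toFun := fun b => ⟨(b.1 : A), by
            obtain ⟨i, hij, hYi⟩ := b.1.2
            refine ⟨i, ?_, hYi⟩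
            rcases eq_or_lt_of_le hij with heq | hlt
            · exfalso
              apply b.2
              apply Subtype.ext
              have hi : i = j := Fin.ext heq.symm
              rw [← hYi, hi]
            · exact hlt⟩
          invFun := fun c => ⟨⟨(c : A), by
              obtain ⟨i, hij, hYi⟩ := c.2
              exact ⟨i, le_of_lt hij, hYi⟩⟩, by
            obtain ⟨i, hij, hYi⟩ := c.2
            intro h
            have hval : (c : A) = Y j := Subtype.ext_iff.1 h
            have : i = j := Y.injective (hYi.trans hval)
            omega⟩
          left_inv := fun b => by
            apply Subtype.ext
            apply Subtype.ext
            rfl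
          right_inv := fun c => by
            apply Subtype.ext
            rfl }
      convert numExt_congr e
        (subrel (subrel r (T (j : ℕ))) {b | b ≠ (⟨Y j, ⟨j, le_refl _, rfl⟩⟩ : ↥(T (j : ℕ)))})
        (subrel r (T ((j : ℕ) + 1))) (fun x y => Iff.rfl) using 2
    have hbase : numExt (subrel r (T 0)) = numExt r := by
      have huniv : ∀ a : A, a ∈ T 0 :=
        fun a => ⟨Y.symm a, Nat.zero_le _, Y.apply_symm_apply a⟩
      exact numExt_congr (Equiv.subtypeUnivEquiv huniv) (subrel r (T 0)) r
        (fun x y => Iff.rfl)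
    have htop : numExt (subrel r (T m)) = 1 := by
      haveI : IsEmpty ↥(T m) := by
        constructor
        rintro ⟨a, i, him, _⟩
        have := i.isLt
        omega
      exact numExt_of_isEmpty _
    calc (∏ j : Fin m,
        ((numExtFirst (subrel r {a : A | ∃ i : Fin m, j ≤ i ∧ Y i = a})
            ⟨Y j, ⟨j, le_refl j, rfl⟩⟩ : ℕ) : ℝ) /
          ((numExt (subrel r {a : A | ∃ i : Fin m, j ≤ i ∧ Y i = a}) : ℕ) : ℝ))
        = ∏ j : Fin m, (fun k : ℕ =>
            ((numExt (subrel r (T (k + 1))) : ℕ) : ℝ) /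
              ((numExt (subrel r (T k)) : ℕ) : ℝ)) (j : ℕ) := by
          refine Finset.prod_congr rfl (fun j _ => ?_)
          show ((numExtFirst (subrel r (T (j : ℕ))) ⟨Y j, ⟨j, le_refl _, rfl⟩⟩ : ℕ) : ℝ) /
              ((numExt (subrel r (T (j : ℕ))) : ℕ) : ℝ) = _
          rw [hstep j]
      _ = ∏ i ∈ Finset.range m, (fun k : ℕ =>
            ((numExt (subrel r (T (k + 1))) : ℕ) : ℝ) /
              ((numExt (subrel r (T k)) : ℕ) : ℝ)) i :=
          Fin.prod_univ_eq_prod_range (fun k : ℕ =>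
            ((numExt (subrel r (T (k + 1))) : ℕ) : ℝ) /
              ((numExt (subrel r (T k)) : ℕ) : ℝ)) m
      _ = ((numExt (subrel r (T m)) : ℕ) : ℝ) / ((numExt (subrel r (T 0)) : ℕ) : ℝ) :=
          prod_div_telescope _ hgne m
      _ = 1 / ((numExt r : ℕ) : ℝ) := by rw [htop, hbase]; norm_num
  · rw [if_neg hY]
    simp only [IsLinExt] at hY
    push_neg at hY
    obtain ⟨i, j, hij, hr⟩ := hY
    apply Finset.prod_eq_zero (Finset.mem_univ i)
    have hz : numExtFirst (subrel r {a : A | ∃ i' : Fin m, i ≤ i' ∧ Y i' = a})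
        ⟨Y i, ⟨i, le_refl i, rfl⟩⟩ = 0 :=
      numExtFirst_eq_zero _ (hsub_irr _)
        (b := ⟨Y j, ⟨j, le_of_lt hij, rfl⟩⟩) hr
    rw [hz]
    simp
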